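/- arXiv:1912.00236 — 2 statements merged into one kernel-verified Lean document; each statement's English description precedes it below -/
import Mathlib

section
/- For any strictly increasing sequence of natural numbers u_1 < u_2 < ... < u_n, the number of Gelfand–Tsetlin patterns with bottom row (u_1,...,u_n) equals the product over all 1 ≤ i < j ≤ n of (u_j - u_i)/(j - i). -/
open Finset

/-- A Gelfand–Tsetlin pattern with `n` rows: row `i` (for `i : Fin n`) has
entries `entry i 0, …, entry i i`, rows interlace, and entries beyond the
row length are normalized to `0`. -/
structure GTPattern (n : ℕ) where
  entry : Fin n → ℕ → ℕ
  interlace : ∀ i : Fin n, ∀ h : i.1 + 1 < n, ∀ j : ℕ, j ≤ i.1 →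
    entry ⟨i.1 + 1, h⟩ j ≤ entry i j ∧ entry i j < entry ⟨i.1 + 1, h⟩ (j + 1)
  support : ∀ i : Fin n, ∀ j : ℕ, i.1 < j → entry i j = 0

/-- The number of Gelfand–Tsetlin patterns with `n` rows and bottom row `u`. -/
noncomputable def GTPcount (n : ℕ) (u : Fin n → ℕ) : ℕ :=
  Nat.card {T : GTPattern n //
    ∀ j : Fin n, T.entry ⟨n - 1, Nat.sub_lt j.pos Nat.one_pos⟩ j.1 = u j}

/-- `GTP` of a finite set: patterns whose bottom row is the increasing
enumeration of `U`. -/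
noncomputable def GTPfinset (U : Finset ℕ) : ℕ :=
  GTPcount U.card (fun j => ((U.orderIsoOfFin rfl j : ℕ)))

/-- `P(A,B) = ∏_{(a,b) ∈ A×B, a<b} (b-a)`. -/
def Pprod (A B : Finset ℕ) : ℕ :=
  ∏ p ∈ (A ×ˢ B).filter (fun p => p.1 < p.2), (p.2 - p.1)

/-- The superfactorial `sf m = 1!·2!···m!`. -/
def superfactorial : ℕ → ℕ
  | 0 => 1
  | m + 1 => superfactorial m * Nat.factorial (m + 1)

/-- The matrix of binomial coefficients with rows indexed by `w`. -/
noncomputable def chooseMat (n : ℕ) (w : Fin n → ℕ) : Matrix (Fin n) (Fin n) ℚ :=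
  Matrix.of fun j i => ((w j).choose i : ℚ)

lemma prod_fin_factorial (n : ℕ) : ∏ i : Fin (n + 1), Nat.factorial i.1 = superfactorial n := by
  induction n with
  | zero => simp [superfactorial]
  | succ n ih =>
    rw [Fin.prod_univ_castSucc]
    simp only [Fin.coe_castSucc] at *
    rw [ih, superfactorial, Fin.val_last]

lemma detChoose (n : ℕ) (w : Fin n → ℕ) :
    (chooseMat n w).det * (superfactorial (n - 1) : ℚ) =
      ∏ i : Fin n, ∏ j ∈ Ioi i, ((w j : ℚ) - (w i : ℚ)) := by
  cases n with
  | zero => simp [chooseMat, superfactorial]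
  | succ n =>
    have h := Matrix.det_eval_matrixOfPolynomials_eq_det_vandermonde
      (fun j : Fin (n+1) => ((w j : ℚ))) (fun i => descPochhammer ℚ i)
      (fun i => descPochhammer_natDegree ℚ i) (fun i => monic_descPochhammer ℚ i)
    rw [Matrix.det_vandermonde] at h
    have h2 : (Matrix.of fun (j i : Fin (n+1)) => (descPochhammer ℚ i.1).eval ((w j : ℚ))).det
        = (∏ i : Fin (n+1), (Nat.factorial i.1 : ℚ)) * (chooseMat (n+1) w).det := by
      have := Matrix.det_mul_row (fun i : Fin (n+1) => ((Nat.factorial i.1 : ℚ)))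
        (chooseMat (n+1) w)
      rw [← this]
      congr 1
      ext j i
      simp only [Matrix.of_apply, chooseMat, descPochhammer_eval_eq_descFactorial]
      rw [show ((w j).descFactorial i.1 : ℚ) = ((Nat.factorial i.1 * (w j).choose i.1 : ℕ) : ℚ) by
        rw [Nat.descFactorial_eq_factorial_mul_choose]]
      push_cast
      ring
    rw [h]
    have h3 : (Matrix.of fun i j => Polynomial.eval ((fun j : Fin (n+1) => ((w j : ℚ))) i)
        ((fun i : Fin (n+1) => descPochhammer ℚ i.1) j)).det
        = (Matrix.of fun (j i : Fin (n+1)) => (descPochhammer ℚ i.1).eval ((w j : ℚ))).det := rfl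
    rw [h3, h2]
    rw [show ((n + 1 : ℕ) - 1) = n from rfl, ← prod_fin_factorial n]
    push_cast
    ring

lemma hockey_nat (x i : ℕ) : ∑ t ∈ range x, t.choose i = x.choose (i + 1) := by
  induction x with
  | zero => simp
  | succ x ih => rw [Finset.sum_range_succ, ih, Nat.choose_succ_succ' x i, Nat.add_comm]

lemma sum_Ico_chooseQ {a b : ℕ} (i : ℕ) (h : a ≤ b) :
    ∑ t ∈ Ico a b, ((t.choose i : ℚ)) = (b.choose (i + 1) : ℚ) - (a.choose (i + 1) : ℚ) := by
  rw [Finset.sum_Ico_eq_sub _ h]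
  rw [show ∀ c : ℕ, ∑ t ∈ range c, ((t.choose i : ℚ)) = ((c.choose (i+1) : ℕ) : ℚ) from
    fun c => by rw [← hockey_nat c i]; push_cast; rfl]
  rw [show ∀ c : ℕ, ∑ t ∈ range c, ((t.choose i : ℚ)) = ((c.choose (i+1) : ℕ) : ℚ) from
    fun c => by rw [← hockey_nat c i]; push_cast; rfl]

lemma sum_box (n : ℕ) (u : Fin (n + 1) → ℕ) (hu : Monotone u) :
    ∑ v ∈ Fintype.piFinset (fun j : Fin n => Ico (u j.castSucc) (u j.succ)),
      (chooseMat n v).det = (chooseMat (n + 1) u).det := by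
  classical
  set D : Matrix (Fin n) (Fin n) ℚ :=
    Matrix.of (fun j i => ((u j.succ).choose (i.1 + 1) : ℚ) - ((u j.castSucc).choose (i.1 + 1) : ℚ))
    with hD
  have step1 : ∑ v ∈ Fintype.piFinset (fun j : Fin n => Ico (u j.castSucc) (u j.succ)),
      (chooseMat n v).det = D.det := by
    have := (Matrix.detRowAlternating (n := Fin n) (R := ℚ)).toMultilinearMap.map_sum_finset
      (g := fun j t => (fun i : Fin n => ((t.choose i.1 : ℚ))))
      (A := fun j : Fin n => Ico (u j.castSucc) (u j.succ))
    have e1 : ∀ v : Fin n → ℕ, (chooseMat n v).det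
        = Matrix.detRowAlternating (fun j (i : Fin n) => ((v j).choose i.1 : ℚ)) := fun v => rfl
    simp only [e1]
    refine Eq.trans this.symm ?_
    show Matrix.det _ = Matrix.det _
    congr 1
    ext j i
    show (∑ t ∈ Ico (u j.castSucc) (u j.succ), (fun i : Fin n => ((t.choose i.1 : ℚ)))) i = _
    rw [Finset.sum_apply]
    exact sum_Ico_chooseQ i.1 (hu (Fin.castSucc_le_succ j))
  rw [step1]
  -- row reduction on the (n+1)-matrix
  set B : Matrix (Fin (n + 1)) (Fin (n + 1)) ℚ :=
    (fun k => Fin.cases (chooseMat (n + 1) u 0)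
      (fun j i => chooseMat (n + 1) u j.succ i - chooseMat (n + 1) u j.castSucc i) k) with hB
  have hdetB : (chooseMat (n + 1) u).det = B.det := by
    apply Matrix.det_eq_of_forall_row_eq_smul_add_pred (c := fun _ => (1 : ℚ))
    · intro j; simp [hB]
    · intro i j; simp [hB]
  have expand : B.det = D.det := by
    rw [Matrix.det_succ_column_zero, Finset.sum_eq_single 0]
    · have hB00 : B 0 0 = 1 := by simp [hB, chooseMat]
      have hsub : B.submatrix (Fin.succAbove 0) Fin.succ = D := by
        ext j i
        show B (Fin.succAbove 0 j) i.succ = D j i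
        simp [hB, hD, chooseMat, Fin.succAbove_zero]
      rw [hB00, hsub]
      simp
    · intro i _ hi
      obtain ⟨j, rfl⟩ := Fin.eq_succ_of_ne_zero hi
      have : B j.succ 0 = 0 := by simp [hB, chooseMat]
      rw [this]; ring
    · intro h; exact absurd (Finset.mem_univ _) h
  rw [hdetB, expand]
/-- bottom row of a pattern -/
def botRow {n : ℕ} (T : GTPattern n) (j : Fin n) : ℕ :=
  T.entry ⟨n - 1, Nat.sub_lt j.pos Nat.one_pos⟩ j.1

lemma GTPattern.ext' {n} {T S : GTPattern n} (h : T.entry = S.entry) : T = S := by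
  cases T; cases S; cases h; rfl

lemma entry_mk_congr {m : ℕ} (T : GTPattern m) {a b : ℕ} (hab : a = b) (ha : a < m) (hb : b < m)
    (j : ℕ) : T.entry ⟨a, ha⟩ j = T.entry ⟨b, hb⟩ j := by subst hab; rfl

lemma GTPcount_eq (n : ℕ) (u : Fin n → ℕ) :
    GTPcount n u = Nat.card {T : GTPattern n // ∀ j : Fin n, botRow T j = u j} := rfl

/-- truncation: drop the last row -/
def trunc {n : ℕ} (T : GTPattern (n + 1)) : GTPattern n where
  entry i j := T.entry i.castSucc j
  interlace i h j hj := T.interlace i.castSucc (Nat.lt_succ_of_lt h) j hj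
  support i j hij := T.support i.castSucc j hij

/-- the extension of a pattern by a new bottom row -/
def extend {n : ℕ} (u : Fin (n + 1) → ℕ) (v : Fin n → ℕ) (S : GTPattern n)
    (hS : ∀ j : Fin n, botRow S j = v j)
    (hbox : ∀ j : Fin n, u j.castSucc ≤ v j ∧ v j < u j.succ) : GTPattern (n + 1) where
  entry i j := if h : i.1 < n then S.entry ⟨i.1, h⟩ j else if h2 : j < n + 1 then u ⟨j, h2⟩ else 0
  interlace i h j hj := by
    have hi : i.1 < n := by omega
    by_cases hc : i.1 + 1 < n
    · have := S.interlace ⟨i.1, hi⟩ hc j hj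
      simp only [dif_pos hi, dif_pos hc]
      exact this
    · have hin : i.1 + 1 = n := by omega
      have hj1 : j < n + 1 := by omega
      have hj2 : j + 1 < n + 1 := by omega
      simp only [dif_pos hi, dif_neg (show ¬ (i.1 + 1 < n) from hc), dif_pos hj1, dif_pos hj2]
      have hjn : j < n := by omega
      have hbot : S.entry ⟨i.1, hi⟩ j = v ⟨j, hjn⟩ := by
        refine (entry_mk_congr S (show i.1 = n - 1 by omega) hi (by omega) j).trans ?_
        exact hS ⟨j, hjn⟩
      rw [hbot]
      exact ⟨(hbox ⟨j, hjn⟩).1, (hbox ⟨j, hjn⟩).2⟩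
  support i j hij := by
    by_cases h : i.1 < n
    · simp only [dif_pos h]
      exact S.support ⟨i.1, h⟩ j hij
    · simp only [dif_neg h]
      rw [dif_neg (by omega)]

lemma extend_bot {n : ℕ} (u : Fin (n + 1) → ℕ) (v : Fin n → ℕ) (S : GTPattern n)
    (hS : ∀ j : Fin n, botRow S j = v j) (hbox : ∀ j, u j.castSucc ≤ v j ∧ v j < u j.succ) :
    ∀ j : Fin (n + 1), botRow (extend u v S hS hbox) j = u j := by
  intro j
  show (if h : n < n then _ else if h2 : (j : ℕ) < n + 1 then u ⟨j.1, h2⟩ else (0:ℕ)) = u j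
  rw [dif_neg (lt_irrefl n), dif_pos j.2]

lemma trunc_extend_entry {n : ℕ} (u : Fin (n + 1) → ℕ) (v : Fin n → ℕ) (S : GTPattern n)
    (hS : ∀ j : Fin n, botRow S j = v j) (hbox : ∀ j, u j.castSucc ≤ v j ∧ v j < u j.succ) :
    (trunc (extend u v S hS hbox)).entry = S.entry := by
  funext i j
  show (if h : i.1 < n then S.entry ⟨i.1, h⟩ j else _) = S.entry i j
  rw [dif_pos i.2]

lemma extend_trunc_entry {n : ℕ} (u : Fin (n + 1) → ℕ) (T : GTPattern (n + 1))
    (hT : ∀ j : Fin (n + 1), botRow T j = u j)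
    (hbox : ∀ j : Fin n, u j.castSucc ≤ botRow (trunc T) j ∧ botRow (trunc T) j < u j.succ) :
    (extend u (botRow (trunc T)) (trunc T) (fun _ => rfl) hbox).entry = T.entry := by
  funext i j
  show (if h : i.1 < n then (trunc T).entry ⟨i.1, h⟩ j else if h2 : j < n + 1 then u ⟨j, h2⟩ else 0)
      = T.entry i j
  by_cases h : i.1 < n
  · rw [dif_pos h]
    rfl
  · have hin : i = ⟨n, by omega⟩ := Fin.ext (show i.1 = n by omega)
    rw [dif_neg h]
    by_cases h2 : j < n + 1
    · rw [dif_pos h2, hin]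
      exact (hT ⟨j, h2⟩).symm
    · rw [dif_neg h2, hin]
      exact (T.support ⟨n, by omega⟩ j (by omega)).symm

/-- the bottom-but-one row of a pattern with prescribed bottom row lies in the box -/
lemma trunc_mem_box {n : ℕ} (u : Fin (n + 1) → ℕ) (T : GTPattern (n + 1))
    (hT : ∀ j : Fin (n + 1), botRow T j = u j) (j : Fin n) :
    u j.castSucc ≤ botRow (trunc T) j ∧ botRow (trunc T) j < u j.succ := by
  have hn : 0 < n := j.pos
  have hj : j.1 < n := j.2
  have hlt : n - 1 < n + 1 := by omega
  have h' : (⟨n - 1, hlt⟩ : Fin (n + 1)).1 + 1 < n + 1 := by show n - 1 + 1 < n + 1; omega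
  have key := T.interlace ⟨n - 1, hlt⟩ h' j.1 (show j.1 ≤ n - 1 by omega)
  have e1 : T.entry ⟨(⟨n - 1, hlt⟩ : Fin (n + 1)).1 + 1, h'⟩ j.1 = u j.castSucc := by
    refine (entry_mk_congr T (show n - 1 + 1 = n + 1 - 1 by omega) h' (by omega) j.1).trans ?_
    exact hT j.castSucc
  have e2 : T.entry ⟨(⟨n - 1, hlt⟩ : Fin (n + 1)).1 + 1, h'⟩ (j.1 + 1) = u j.succ := by
    refine (entry_mk_congr T (show n - 1 + 1 = n + 1 - 1 by omega) h' (by omega) (j.1 + 1)).trans ?_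
    exact hT j.succ
  refine ⟨le_trans (le_of_eq e1.symm) key.1, lt_of_lt_of_le key.2 (le_of_eq e2)⟩

lemma sigma_subtype_eq {γ : Type*} {β : Type*} {P : γ → β → Prop}
    (a b : γ) (x : {y // P a y}) (y : {y // P b y}) (h1 : a = b) (h2 : x.1 = y.1) :
    (⟨a, x⟩ : Σ c : γ, {y // P c y}) = ⟨b, y⟩ := by
  cases h1
  obtain ⟨x, hx⟩ := x; obtain ⟨y, hy⟩ := y
  cases h2
  rfl

noncomputable def gtEquiv (n : ℕ) (u : Fin (n + 1) → ℕ) :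
    {T : GTPattern (n + 1) // ∀ j, botRow T j = u j} ≃
      Σ v : (Fintype.piFinset fun j : Fin n => Finset.Ico (u j.castSucc) (u j.succ)),
        {S : GTPattern n // ∀ j : Fin n, botRow S j = v.1 j} where
  toFun T := ⟨⟨botRow (trunc T.1), by
      rw [Fintype.mem_piFinset]; intro j; rw [Finset.mem_Ico]
      exact trunc_mem_box u T.1 T.2 j⟩, ⟨trunc T.1, fun j => rfl⟩⟩
  invFun x := ⟨extend u x.1.1 x.2.1 x.2.2 (fun j => by
      have := (Fintype.mem_piFinset).1 x.1.2 j
      rw [Finset.mem_Ico] at this; exact this),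
    extend_bot _ _ _ _ _⟩
  left_inv T := Subtype.ext (GTPattern.ext' (extend_trunc_entry u T.1 T.2 (fun j => trunc_mem_box u T.1 T.2 j)))
  right_inv x := by
    obtain ⟨⟨v, hv⟩, ⟨S, hS⟩⟩ := x
    have hbox : ∀ j : Fin n, u j.castSucc ≤ v j ∧ v j < u j.succ := fun j => by
      have := Fintype.mem_piFinset.1 hv j
      rwa [Finset.mem_Ico] at this
    have hTS : ∀ hbox, trunc (extend u v S hS hbox) = S :=
      fun hbox => GTPattern.ext' (trunc_extend_entry u v S hS hbox)
    dsimp only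
    refine sigma_subtype_eq
      (P := fun (c : {x // x ∈ Fintype.piFinset fun j : Fin n => Ico (u j.castSucc) (u j.succ)})
        (S : GTPattern n) => ∀ j : Fin n, botRow S j = c.1 j) _ _ _ _ ?h1 ?h2
    case h2 => exact hTS hbox
    case h1 =>
      refine Subtype.ext (funext fun j => ?_)
      show botRow (trunc (extend u v S hS hbox)) j = v j
      rw [hTS]
      exact hS j

lemma gtFinite : ∀ (n : ℕ) (u : Fin n → ℕ), Finite {T : GTPattern n // ∀ j, botRow T j = u j}
  | 0, u => by
    haveI : Subsingleton (GTPattern 0) := ⟨fun T S => GTPattern.ext' (funext fun i => i.elim0)⟩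
    infer_instance
  | (n + 1), u => by
    haveI : ∀ v : (Fintype.piFinset fun j : Fin n => Finset.Ico (u j.castSucc) (u j.succ)),
        Finite {S : GTPattern n // ∀ j : Fin n, botRow S j = v.1 j} :=
      fun v => gtFinite n v.1
    exact Finite.of_equiv _ (gtEquiv n u).symm

lemma GTPcount_rec (n : ℕ) (u : Fin (n + 1) → ℕ) :
    GTPcount (n + 1) u =
      ∑ v ∈ Fintype.piFinset (fun j : Fin n => Finset.Ico (u j.castSucc) (u j.succ)),
        GTPcount n v := by
  classical
  rw [GTPcount_eq, Nat.card_congr (gtEquiv n u)]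
  haveI F : ∀ v : (Fintype.piFinset fun j : Fin n => Finset.Ico (u j.castSucc) (u j.succ)),
      Fintype {S : GTPattern n // ∀ j : Fin n, botRow S j = v.1 j} :=
    fun v => @Fintype.ofFinite _ (gtFinite n v.1)
  rw [Nat.card_eq_fintype_card, Fintype.card_sigma,
    ← Finset.sum_coe_sort _ (fun w => GTPcount n w)]
  exact Finset.sum_congr rfl fun v _ => by
    rw [GTPcount_eq, Nat.card_eq_fintype_card]

lemma GTPcount_zero (u : Fin 0 → ℕ) : GTPcount 0 u = 1 := by
  haveI : Subsingleton (GTPattern 0) := ⟨fun T S => GTPattern.ext' (funext fun i => i.elim0)⟩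
  rw [GTPcount_eq]
  have T0 : GTPattern 0 := ⟨fun i => i.elim0, fun i => i.elim0, fun i => i.elim0⟩
  haveI : Unique {T : GTPattern 0 // ∀ j, botRow T j = u j} :=
    { default := ⟨T0, fun j => j.elim0⟩,
      uniq := fun a => Subtype.ext (Subsingleton.elim _ _) }
  exact Nat.card_unique

lemma superfactorial_eq : ∀ m, superfactorial m = Nat.superFactorial m
  | 0 => rfl
  | m + 1 => by
    rw [superfactorial, superfactorial_eq m, Nat.superFactorial_succ, Nat.mul_comm]

lemma superfactorial_pos : ∀ m, 0 < superfactorial m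
  | 0 => Nat.one_pos
  | m + 1 => Nat.mul_pos (superfactorial_pos m) (Nat.factorial_pos _)

open Matrix in
lemma gt_det : ∀ (n : ℕ) (u : Fin n → ℕ), StrictMono u → (GTPcount n u : ℚ) = (chooseMat n u).det
  | 0, u, _ => by
    rw [GTPcount_zero]
    simp [chooseMat]
  | (n + 1), u, hu => by
    rw [GTPcount_rec]
    push_cast
    rw [Finset.sum_congr rfl (fun v hv => ?_), sum_box n u hu.monotone]
    have hbox : ∀ j : Fin n, u j.castSucc ≤ v j ∧ v j < u j.succ := fun j => by
      have := Fintype.mem_piFinset.1 hv j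
      rwa [Finset.mem_Ico] at this
    refine gt_det n v (fun j k hjk => ?_)
    calc v j < u j.succ := (hbox j).2
      _ ≤ u k.castSucc := hu.monotone (by
          simp only [Fin.le_def, Fin.val_succ, Fin.coe_castSucc]
          exact hjk)
      _ ≤ v k := (hbox k).1

lemma prod_pairs {M : Type*} [CommMonoid M] (n : ℕ) (f : Fin n → Fin n → M) :
    ∏ p ∈ Finset.univ.filter (fun p : Fin n × Fin n => p.1 < p.2), f p.1 p.2
      = ∏ i : Fin n, ∏ j ∈ Ioi i, f i j := by
  classical
  rw [← Finset.prod_sigma univ (fun i => Ioi i) (fun q => f q.1 q.2)]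
  refine Finset.prod_nbij' (fun p => ⟨p.1, p.2⟩) (fun q => (q.1, q.2)) ?_ ?_ ?_ ?_ ?_
  · intro p hp
    simp only [Finset.mem_filter] at hp
    simp [Finset.mem_sigma, Finset.mem_Ioi, hp.2]
  · intro q hq
    simp only [Finset.mem_sigma, Finset.mem_Ioi] at hq
    simp [hq.2]
  · intro p _; rfl
  · intro q _; rfl
  · intro p _; rfl

/-- Product formula for GTP counts. -/
theorem stmt_1 (n : ℕ) (u : Fin n → ℕ) (hu : StrictMono u) :
    (GTPcount n u : ℚ) =
      ∏ p ∈ Finset.univ.filter (fun p : Fin n × Fin n => p.1 < p.2),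
        (((u p.2 : ℚ) - (u p.1 : ℚ)) / ((p.2.1 : ℚ) - (p.1.1 : ℚ))) := by
  cases n with
  | zero =>
    rw [GTPcount_zero]
    rw [show (Finset.univ.filter (fun p : Fin 0 × Fin 0 => p.1 < p.2)) = ∅ by
      apply Finset.eq_empty_of_forall_notMem; intro p; exact p.1.elim0]
    simp
  | succ m =>
    rw [gt_det _ u hu]
    have hdet := detChoose (m + 1) u
    have hsf : ((superfactorial m : ℚ)) ≠ 0 := by
      exact_mod_cast (superfactorial_pos m).ne'
    rw [Finset.prod_div_distrib,
      prod_pairs (m + 1) (fun i j : Fin (m + 1) => ((u j : ℚ) - (u i : ℚ))),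
      prod_pairs (m + 1) (fun i j : Fin (m + 1) => ((j.1 : ℚ) - (i.1 : ℚ)))]
    have hden : ∏ i : Fin (m + 1), ∏ j ∈ Ioi i, ((j.1 : ℚ) - (i.1 : ℚ))
        = (superfactorial m : ℚ) := by
      have h1 := Matrix.det_vandermonde_id_eq_superFactorial (R := ℚ) m
      rw [Matrix.det_vandermonde] at h1
      rw [superfactorial_eq]
      exact_mod_cast h1
    rw [hden]
    rw [show ((m + 1 : ℕ) - 1) = m from rfl] at hdet
    field_simp
    linarith [hdet]
end

section
/- Let U, L be finite sets of natural numbers, C = U ∩ L, Ū = U \ C, L̄ = L \ C. Then P(U,U)·P(L,L) = P(Ū,Ū) · P(L̄,L̄) · P(Ū ∪ L̄, C) · P(C, Ū ∪ L̄) · P(C,C)². -/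
open Finset

lemma Pprod_union_left (A B C : Finset ℕ) (h : Disjoint A B) :
    Pprod (A ∪ B) C = Pprod A C * Pprod B C := by
  unfold Pprod
  rw [Finset.union_product, Finset.filter_union, Finset.prod_union]
  apply Finset.disjoint_filter_filter
  simp only [Finset.disjoint_left, Finset.mem_product]
  rintro ⟨a, b⟩ ⟨ha, _⟩ ⟨hb, _⟩
  exact (Finset.disjoint_left.1 h ha) hb

lemma Pprod_union_right (A B C : Finset ℕ) (h : Disjoint A B) :
    Pprod C (A ∪ B) = Pprod C A * Pprod C B := by
  unfold Pprod
  rw [Finset.product_union, Finset.filter_union, Finset.prod_union]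
  apply Finset.disjoint_filter_filter
  simp only [Finset.disjoint_left, Finset.mem_product]
  rintro ⟨a, b⟩ ⟨_, ha⟩ ⟨_, hb⟩
  exact (Finset.disjoint_left.1 h ha) hb

/-- Factorization of `P(U,U)·P(L,L)` with `C = U ∩ L`. -/
theorem stmt_6 (U L : Finset ℕ) :
    Pprod U U * Pprod L L =
      Pprod (U \ (U ∩ L)) (U \ (U ∩ L)) * Pprod (L \ (U ∩ L)) (L \ (U ∩ L)) *
        Pprod ((U \ (U ∩ L)) ∪ (L \ (U ∩ L))) (U ∩ L) *
        Pprod (U ∩ L) ((U \ (U ∩ L)) ∪ (L \ (U ∩ L))) *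
        Pprod (U ∩ L) (U ∩ L) ^ 2 := by
  set C := U ∩ L with hC
  have hUd : Disjoint (U \ C) C := Finset.sdiff_disjoint
  have hLd : Disjoint (L \ C) C := Finset.sdiff_disjoint
  have hUL : Disjoint (U \ C) (L \ C) := by
    simp only [Finset.disjoint_left, Finset.mem_sdiff, hC, Finset.mem_inter]
    rintro a ⟨haU, hn⟩ ⟨haL, _⟩
    exact hn ⟨haU, haL⟩
  have hU : (U \ C) ∪ C = U := Finset.sdiff_union_of_subset Finset.inter_subset_left
  have hL : (L \ C) ∪ C = L := Finset.sdiff_union_of_subset Finset.inter_subset_right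
  calc Pprod U U * Pprod L L
      = Pprod ((U \ C) ∪ C) ((U \ C) ∪ C) * Pprod ((L \ C) ∪ C) ((L \ C) ∪ C) := by
        rw [hU, hL]
    _ = _ := by
        rw [Pprod_union_left _ _ _ hUd, Pprod_union_left _ _ _ hLd,
          Pprod_union_right _ _ _ hUd, Pprod_union_right _ _ _ hUd,
          Pprod_union_right _ _ _ hLd, Pprod_union_right _ _ _ hLd,
          Pprod_union_left _ _ _ hUL, Pprod_union_right _ _ _ hUL]
        ring
end
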